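/- arXiv:2209.00573 — 4 statements merged into one kernel-verified Lean document; each statement's English description precedes it below -/
import Mathlib

section
/- Let M = (S, A, s0, P) be a finite MDP and φ = ¬U 𝖴 F a reach-avoid objective with U, F ⊆ S disjoint. Then a state s ∈ ASW(φ) if and only if there exists a ranking witness (W, r) for φ with s ∈ W. -/
open scoped BigOperators Classical

/-- A finite Markov decision process: finite state set `S`, finite action set `A`,
nonempty enabled-action sets, an initial state, and a transition kernel that is a
probability distribution on `S` for every state and enabled action. -/
structure MDP (S A : Type) [Fintype S] [Fintype A] where
  act : S → Finset A
  act_nonempty : ∀ s, (act s).Nonempty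
  init : S
  P : S → A → S → ℝ
  P_nonneg : ∀ s a s', 0 ≤ P s a s'
  P_sum_one : ∀ s, ∀ a ∈ act s, (∑ s', P s a s') = 1

variable {S A : Type} [Fintype S] [Fintype A]

/-- `Post(s,a)`: states reachable with positive probability. -/
def post (M : MDP S A) (s : S) (a : A) : Set S := {s' | 0 < M.P s a s'}

/-- The last state of a history `(s, l)` (state `s` followed by action-state steps `l`). -/
def lastState (s : S) (l : List (A × S)) : S :=
  (l.getLast?.map Prod.snd).getD s

/-- `(s, l)` is a (valid) history of `M`: each action is enabled and each transition
has positive probability. -/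
def isHist (M : MDP S A) : S → List (A × S) → Prop
  | _, [] => True
  | s, (a, s') :: rest => a ∈ M.act s ∧ 0 < M.P s a s' ∧ isHist M s' rest

/-- The `i`-th state of the history `(s, l)`. -/
def stateAt (s : S) (l : List (A × S)) : ℕ → S
  | 0 => s
  | i + 1 => ((l[i]?).map Prod.snd).getD s

/-- `Occ(h)`: the set of states occurring in the history `(s, l)`. -/
def occ (s : S) (l : List (A × S)) : Set S :=
  insert s {t | t ∈ l.map Prod.snd}

/-- The history `(s, l)` satisfies the reach-avoid objective `¬U 𝖴 F`. -/
def satRA (U F : Set S) (s : S) (l : List (A × S)) : Prop :=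
  ∃ k ≤ l.length, stateAt s l k ∈ F ∧ ∀ i < k, stateAt s l i ∉ U ∪ F

/-- Probability of the continuation `l` of the history `(s0, pre)` under strategy `π`. -/
noncomputable def prFrom (M : MDP S A) (π : S → List (A × S) → A → ℝ) :
    S → List (A × S) → List (A × S) → ℝ
  | _, _, [] => 1
  | s0, pre, (a, s') :: rest =>
      π s0 pre a * M.P (lastState s0 pre) a s' * prFrom M π s0 (pre ++ [(a, s')]) rest

/-- `Pr(h; M_π)`: the probability of the history `h = (s, l)` under strategy `π`. -/
noncomputable def prHist (M : MDP S A) (π : S → List (A × S) → A → ℝ)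
    (s : S) (l : List (A × S)) : ℝ :=
  prFrom M π s [] l

/-- A (randomized, history-dependent) strategy: maps each history to a probability
distribution over the actions enabled at its last state. -/
structure Strategy (M : MDP S A) where
  toFun : S → List (A × S) → A → ℝ
  nonneg : ∀ s l a, 0 ≤ toFun s l a
  sum_one : ∀ s l, (∑ a, toFun s l a) = 1
  support_mem : ∀ s l a, 0 < toFun s l a → a ∈ M.act (lastState s l)

/-- A (randomized) Markov strategy: maps each state to a probability distribution over
the actions enabled at that state. -/
structure MarkovStrategy (M : MDP S A) where
  toFun : S → A → ℝ
  nonneg : ∀ s a, 0 ≤ toFun s a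
  sum_one : ∀ s, (∑ a, toFun s a) = 1
  support_mem : ∀ s a, 0 < toFun s a → a ∈ M.act s

/-- The history-dependent strategy induced by a Markov strategy. -/
def MarkovStrategy.strat {M : MDP S A} (σ : MarkovStrategy M) : Strategy M where
  toFun s l a := σ.toFun (lastState s l) a
  nonneg s l a := σ.nonneg _ a
  sum_one s l := σ.sum_one _
  support_mem s l a h := σ.support_mem _ a h

/-- Sum of `Pr(h; M_π)` over all histories `h` of length `n` starting at `s` that
satisfy the reach-avoid objective `¬U 𝖴 F`. -/
noncomputable def satProbN (M : MDP S A) (π : S → List (A × S) → A → ℝ)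
    (U F : Set S) (s : S) (n : ℕ) : ℝ :=
  ∑ f : Fin n → A × S,
    if isHist M s (List.ofFn f) ∧ satRA U F s (List.ofFn f)
    then prHist M π s (List.ofFn f) else 0

/-- `Pr_s(¬U 𝖴 F; M_π)`: supremum over `n` of `satProbN`. -/
noncomputable def prSat (M : MDP S A) (π : S → List (A × S) → A → ℝ)
    (U F : Set S) (s : S) : ℝ :=
  ⨆ n : ℕ, satProbN M π U F s n

/-- The almost-sure winning region `ASW(¬U 𝖴 F)`. -/
def ASW (M : MDP S A) (U F : Set S) : Set S :=
  {s | ∃ π : Strategy M, prSat M π.toFun U F s = 1}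

/-- `Allowed(s)`: enabled actions keeping the agent inside `ASW(¬U 𝖴 F)`
(empty for `s ∉ ASW(¬U 𝖴 F)`). -/
def allowed (M : MDP S A) (U F : Set S) (s : S) : Set A :=
  {a | s ∈ ASW M U F ∧ a ∈ M.act s ∧ post M s a ⊆ ASW M U F}

/-- A defender state-observation function: observation-equivalence classes partition the
state space and observation-equivalent states have the same enabled actions. -/
structure ObsFun (M : MDP S A) where
  obs : S → Set S
  mem_self : ∀ s, s ∈ obs s
  eq_of_mem : ∀ s s', s' ∈ obs s → obs s' = obs s
  act_eq : ∀ s s', s' ∈ obs s → M.act s' = M.act s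

/-- Action-visible belief update `Update_v(B, a, s'')`. -/
def updateV (M : MDP S A) (O : ObsFun M) (U0 F0 : Set S)
    (B : Set S) (a : A) (s'' : S) : Set S :=
  {s' | ∃ so ∈ B, a ∈ allowed M U0 F0 so ∧ s' ∈ post M so a ∧ O.obs s' = O.obs s''}

/-- Action-invisible belief update `Update_inv(B, s'')`. -/
def updateInv (M : MDP S A) (O : ObsFun M) (U0 F0 : Set S)
    (B : Set S) (s'' : S) : Set S :=
  {s' | ∃ so ∈ B, ∃ ao ∈ allowed M U0 F0 so, s' ∈ post M so ao ∧ O.obs s' = O.obs s''}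

/-- The unsafe set `U~1 = {(s,B) : s ∈ U1, B ≠ ∅} ∪ {(s,∅) : s ∈ S}` of the
augmented MDP. -/
def augU (U1 : Set S) : Set (S × Set S) :=
  {p | (p.1 ∈ U1 ∧ p.2 ≠ ∅) ∨ p.2 = ∅}

/-- The target set `F~1 = F1 × (2^S \ {∅})` of the augmented MDP. -/
def augF (F1 : Set S) : Set (S × Set S) :=
  {p | p.1 ∈ F1 ∧ p.2 ≠ ∅}

/-- The action-visible augmented MDP `M~`. -/
noncomputable def augV (M : MDP S A) (O : ObsFun M) (U0 F0 : Set S) :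
    MDP (S × Set S) A where
  act p := M.act p.1
  act_nonempty p := M.act_nonempty p.1
  init := (M.init, O.obs M.init)
  P p a q :=
    if p.2.Nonempty ∧ ∃ so ∈ p.2, a ∈ allowed M U0 F0 so then
      (if q.2 = updateV M O U0 F0 p.2 a q.1 then M.P p.1 a q.1 else 0)
    else (if q = (p.1, (∅ : Set S)) then 1 else 0)
  P_nonneg := by
    intro p a q
    try dsimp only
    split_ifs <;> first | exact M.P_nonneg _ _ _ | norm_num
  P_sum_one := by
    intro p a ha
    by_cases hc : p.2.Nonempty ∧ ∃ so ∈ p.2, a ∈ allowed M U0 F0 so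
    · simp only [if_pos hc]
      rw [Fintype.sum_prod_type]
      have : ∀ t : S,
          (∑ C : Set S, if C = updateV M O U0 F0 p.2 a t then M.P p.1 a t else 0)
            = M.P p.1 a t := by
        intro t
        simp [Finset.sum_ite_eq']
      simp only [this]
      exact M.P_sum_one p.1 a ha
    · simp only [if_neg hc]
      simp [Finset.sum_ite_eq']

/-- The action-invisible augmented MDP `M^`. -/
noncomputable def augInv (M : MDP S A) (O : ObsFun M) (U0 F0 : Set S) :
    MDP (S × Set S) A where
  act p := M.act p.1
  act_nonempty p := M.act_nonempty p.1
  init := (M.init, O.obs M.init)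
  P p a q :=
    if (∃ so ∈ p.2, a ∈ allowed M U0 F0 so) ∧ a ∈ M.act p.1 then
      (if q.2 = updateInv M O U0 F0 p.2 q.1 then M.P p.1 a q.1 else 0)
    else (if q = (p.1, (∅ : Set S)) then 1 else 0)
  P_nonneg := by
    intro p a q
    try dsimp only
    split_ifs <;> first | exact M.P_nonneg _ _ _ | norm_num
  P_sum_one := by
    intro p a ha
    by_cases hc : (∃ so ∈ p.2, a ∈ allowed M U0 F0 so) ∧ a ∈ M.act p.1
    · simp only [if_pos hc]
      rw [Fintype.sum_prod_type]
      have : ∀ t : S,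
          (∑ C : Set S, if C = updateInv M O U0 F0 p.2 t then M.P p.1 a t else 0)
            = M.P p.1 a t := by
        intro t
        simp [Finset.sum_ite_eq']
      simp only [this]
      exact M.P_sum_one p.1 a ha
    · simp only [if_neg hc]
      simp [Finset.sum_ite_eq']

/-- The defender's belief after observing (states and actions of) the history `(s0, l)`,
for an action-visible defender: `B0 = DObs_S(s0)`, `B(i+1) = Update_v(Bi, ai, s(i+1))`. -/
def beliefV (M : MDP S A) (O : ObsFun M) (U0 F0 : Set S)
    (s0 : S) (l : List (A × S)) : Set S :=
  l.foldl (fun B p => updateV M O U0 F0 B p.1 p.2) (O.obs s0)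

/-- The defender's belief after observing (the states of) the history `(s0, l)`,
for an action-invisible defender: `B0 = DObs_S(s0)`, `B(i+1) = Update_inv(Bi, s(i+1))`. -/
def beliefInv (M : MDP S A) (O : ObsFun M) (U0 F0 : Set S)
    (s0 : S) (l : List (A × S)) : Set S :=
  l.foldl (fun B p => updateInv M O U0 F0 B p.2) (O.obs s0)

/-- The finite-memory strategy on `M` induced by a Markov strategy of the action-visible
augmented MDP `M~`. -/
noncomputable def inducedV (M : MDP S A) (O : ObsFun M) (U0 F0 : Set S)
    (σ : MarkovStrategy (augV M O U0 F0)) : Strategy M where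
  toFun s l a := σ.toFun (lastState s l, beliefV M O U0 F0 s l) a
  nonneg s l a := σ.nonneg _ a
  sum_one s l := σ.sum_one _
  support_mem s l a h := σ.support_mem _ a h

/-- The finite-memory strategy on `M` induced by a Markov strategy of the
action-invisible augmented MDP `M^`. -/
noncomputable def inducedInv (M : MDP S A) (O : ObsFun M) (U0 F0 : Set S)
    (σ : MarkovStrategy (augInv M O U0 F0)) : Strategy M where
  toFun s l a := σ.toFun (lastState s l, beliefInv M O U0 F0 s l) a
  nonneg s l a := σ.nonneg _ a
  sum_one s l := σ.sum_one _
  support_mem s l a h := σ.support_mem _ a h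

/-- A ranking witness `(W, r)` for the reach-avoid objective `¬U 𝖴 F`. -/
def rankWitness (M : MDP S A) (U F : Set S) (W : Set S) (r : S → ℕ) : Prop :=
  W ∩ U = ∅ ∧
  ∀ s ∈ W \ F, ∃ a ∈ M.act s, post M s a ⊆ W ∧
    (post M s a ∩ {t ∈ W | r t < r s}).Nonempty

section Aux

variable (M : MDP S A)

/-- A raw strategy function satisfying the strategy conditions. -/
def isStrat (π : S → List (A × S) → A → ℝ) : Prop :=
  ∀ s l, (∀ a, 0 ≤ π s l a) ∧ (∑ a, π s l a) = 1 ∧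
    (∀ a, 0 < π s l a → a ∈ M.act (lastState s l))

/-- Shift of a strategy after a first step with action `a` from `s`. -/
def shiftStrat (π : S → List (A × S) → A → ℝ) (s : S) (a : A) :
    S → List (A × S) → A → ℝ :=
  fun t l b => π s ((a, t) :: l) b

lemma lastState_cons (s t : S) (a : A) (l : List (A × S)) :
    lastState s ((a, t) :: l) = lastState t l := by
  cases l with
  | nil => rfl
  | cons x xs =>
      rw [lastState, lastState, List.getLast?_eq_getLast (l := (a, t) :: x :: xs) (by simp)]
      rfl

lemma Strategy.isStrat_toFun (π : Strategy M) : isStrat M π.toFun :=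
  fun s l => ⟨π.nonneg s l, π.sum_one s l, π.support_mem s l⟩

lemma isStrat_shift {π : S → List (A × S) → A → ℝ} (hπ : isStrat M π)
    (s : S) (a : A) : isStrat M (shiftStrat π s a) := by
  intro t l
  refine ⟨fun b => (hπ s ((a, t) :: l)).1 b, (hπ s ((a, t) :: l)).2.1, fun b hb => ?_⟩
  have := (hπ s ((a, t) :: l)).2.2 b hb
  rwa [lastState_cons] at this

lemma prFrom_nonneg {π : S → List (A × S) → A → ℝ} (hπ : ∀ s l a, 0 ≤ π s l a)
    (s : S) : ∀ (l pre : List (A × S)), 0 ≤ prFrom M π s pre l := by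
  intro l
  induction l with
  | nil => intro pre; simp [prFrom]
  | cons p rest ih =>
      intro pre
      obtain ⟨a, s'⟩ := p
      exact mul_nonneg (mul_nonneg (hπ s pre a) (M.P_nonneg _ a s')) (ih _)

lemma prHist_nonneg {π : S → List (A × S) → A → ℝ} (hπ : ∀ s l a, 0 ≤ π s l a)
    (s : S) (l : List (A × S)) : 0 ≤ prHist M π s l :=
  prFrom_nonneg M hπ s l []

lemma prFrom_shift {π : S → List (A × S) → A → ℝ} (s s' : S) (a : A) :
    ∀ (l pre : List (A × S)),
      prFrom M π s ((a, s') :: pre) l = prFrom M (shiftStrat π s a) s' pre l := by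
  intro l
  induction l with
  | nil => intro pre; rfl
  | cons p rest ih =>
      intro pre
      obtain ⟨b, t⟩ := p
      show π s ((a, s') :: pre) b * M.P (lastState s ((a, s') :: pre)) b t *
          prFrom M π s (((a, s') :: pre) ++ [(b, t)]) rest = _
      rw [lastState_cons, List.cons_append, ih]
      rfl

lemma prHist_cons {π : S → List (A × S) → A → ℝ} (s s' : S) (a : A)
    (l : List (A × S)) :
    prHist M π s ((a, s') :: l) =
      π s [] a * M.P s a s' * prHist M (shiftStrat π s a) s' l := by
  show π s [] a * M.P (lastState s []) a s' * prFrom M π s ([] ++ [(a, s')]) l = _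
  simp only [List.nil_append]
  rw [show ([(a, s')] : List (A × S)) = (a, s') :: [] from rfl, prFrom_shift M s s' a l []]
  rfl

lemma stateAt_cons (s s' : S) (a : A) (l : List (A × S)) :
    ∀ j ≤ l.length, stateAt s ((a, s') :: l) (j + 1) = stateAt s' l j := by
  intro j hj
  cases j with
  | zero => simp [stateAt]
  | succ i =>
      have hi : i < l.length := hj
      show ((((a, s') :: l)[i+1]?).map Prod.snd).getD s = stateAt s' l (i + 1)
      rw [List.getElem?_cons_succ, List.getElem?_eq_getElem hi]
      show (l[i]).2 = stateAt s' l (i + 1)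
      rw [show stateAt s' l (i+1) = ((l[i]?).map Prod.snd).getD s' from rfl,
        List.getElem?_eq_getElem hi]
      rfl

lemma satRA_nil (U F : Set S) (s : S) : satRA U F s ([] : List (A × S)) ↔ s ∈ F := by
  constructor
  · rintro ⟨k, hk, hF, _⟩
    have hk0 : k = 0 := by simpa using hk
    subst hk0
    exact hF
  · intro hs
    exact ⟨0, le_rfl, hs, fun i hi => absurd hi (by omega)⟩

lemma satRA_of_F {U F : Set S} {s : S} (hs : s ∈ F) (l : List (A × S)) :
    satRA U F s l := ⟨0, Nat.zero_le _, hs, fun i hi => absurd hi (by omega)⟩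

lemma satRA_cons {U F : Set S} {s : S} (hs : s ∉ U ∪ F) (s' : S) (a : A)
    (l : List (A × S)) : satRA U F s ((a, s') :: l) ↔ satRA U F s' l := by
  constructor
  · rintro ⟨k, hk, hF, hI⟩
    cases k with
    | zero => exact absurd (Set.mem_union_right U hF) hs
    | succ j =>
        have hj : j ≤ l.length := by simpa using hk
        refine ⟨j, hj, ?_, ?_⟩
        · rwa [stateAt_cons s s' a l j hj] at hF
        · intro i hi
          have hi' : i ≤ l.length := by omega
          have := hI (i + 1) (by omega)
          rwa [stateAt_cons s s' a l i hi'] at this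
  · rintro ⟨j, hj, hF, hI⟩
    refine ⟨j + 1, by simpa using Nat.succ_le_succ hj, ?_, ?_⟩
    · rwa [stateAt_cons s s' a l j hj]
    · intro i hi
      cases i with
      | zero => exact hs
      | succ i' =>
          have hi' : i' ≤ l.length := by omega
          rw [stateAt_cons s s' a l i' hi']
          exact hI i' (by omega)

lemma not_satRA_of_U {U F : Set S} (hUF : Disjoint U F) {s : S} (hs : s ∈ U)
    (l : List (A × S)) : ¬ satRA U F s l := by
  rintro ⟨k, hk, hF, hI⟩
  cases k with
  | zero => exact hUF.ne_of_mem hs hF rfl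
  | succ j => exact hI 0 (by omega) (Set.mem_union_left F hs)

end Aux
section Aux2

variable (M : MDP S A)

lemma ofFn_cons {n : ℕ} (p : A × S) (f : Fin n → A × S) :
    List.ofFn (Fin.cons p f : Fin (n + 1) → A × S) = p :: List.ofFn f := by
  rw [List.ofFn_succ]
  simp

lemma sum_decomp_term (π : S → List (A × S) → A → ℝ) (s : S)
    (hnn : ∀ a, 0 ≤ π s [] a) (hsup : ∀ a, 0 < π s [] a → a ∈ M.act s)
    (Q : S → List (A × S) → Prop)
    (hQ : ∀ a s' l, isHist M s ((a, s') :: l) → (Q s ((a, s') :: l) ↔ Q s' l))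
    (a : A) (s' : S) (l : List (A × S)) :
    (if isHist M s ((a, s') :: l) ∧ Q s ((a, s') :: l)
      then prHist M π s ((a, s') :: l) else 0)
    = π s [] a * M.P s a s' *
      (if isHist M s' l ∧ Q s' l then prHist M (shiftStrat π s a) s' l else 0) := by
  by_cases hP : 0 < M.P s a s'
  · by_cases hA : a ∈ M.act s
    · by_cases hc : isHist M s' l ∧ Q s' l
      · have hh : isHist M s ((a, s') :: l) := ⟨hA, hP, hc.1⟩
        rw [if_pos ⟨hh, (hQ a s' l hh).mpr hc.2⟩, if_pos hc, prHist_cons]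
      · rw [if_neg, if_neg hc, mul_zero]
        rintro ⟨hh, hq⟩
        exact hc ⟨hh.2.2, (hQ a s' l hh).mp hq⟩
    · have hz : π s [] a = 0 := by
        rcases lt_or_eq_of_le (hnn a) with h | h
        · exact absurd (hsup a h) hA
        · exact h.symm
      rw [if_neg (fun h => hA h.1.1), hz, zero_mul, zero_mul]
  · have hz : M.P s a s' = 0 := le_antisymm (not_lt.mp hP) (M.P_nonneg s a s')
    rw [if_neg (fun h => hP h.1.2.1), hz, mul_zero, zero_mul]

lemma sum_decomp (π : S → List (A × S) → A → ℝ) (s : S)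
    (hnn : ∀ a, 0 ≤ π s [] a) (hsup : ∀ a, 0 < π s [] a → a ∈ M.act s)
    (Q : S → List (A × S) → Prop)
    (hQ : ∀ a s' l, isHist M s ((a, s') :: l) → (Q s ((a, s') :: l) ↔ Q s' l))
    (n : ℕ) :
    (∑ f : Fin (n + 1) → A × S,
        if isHist M s (List.ofFn f) ∧ Q s (List.ofFn f)
        then prHist M π s (List.ofFn f) else 0)
      = ∑ a, ∑ s', π s [] a * M.P s a s' *
          ∑ f : Fin n → A × S,
            if isHist M s' (List.ofFn f) ∧ Q s' (List.ofFn f)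
            then prHist M (shiftStrat π s a) s' (List.ofFn f) else 0 := by
  have key : ∀ (g : (Fin (n + 1) → A × S) → ℝ),
      ∑ f, g f = ∑ p : A × S, ∑ f : Fin n → A × S, g (Fin.cons p f) := by
    intro g
    rw [← Equiv.sum_comp (Fin.consEquiv fun _ : Fin (n + 1) => A × S) g,
      Fintype.sum_prod_type]
    refine Finset.sum_congr rfl fun p _ => Finset.sum_congr rfl fun f _ => rfl
  rw [key, Fintype.sum_prod_type]
  refine Finset.sum_congr rfl fun a _ => Finset.sum_congr rfl fun s' _ => ?_
  rw [Finset.mul_sum]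
  refine Finset.sum_congr rfl fun f _ => ?_
  rw [ofFn_cons]
  exact sum_decomp_term M π s hnn hsup Q hQ a s' (List.ofFn f)

end Aux2
section Aux3

variable (M : MDP S A)

/-- Total probability mass of valid histories of length `n`. -/
noncomputable def totalN (π : S → List (A × S) → A → ℝ) (s : S) (n : ℕ) : ℝ :=
  ∑ f : Fin n → A × S,
    if isHist M s (List.ofFn f) then prHist M π s (List.ofFn f) else 0

lemma sum_weights {π : S → List (A × S) → A → ℝ} (s : S)
    (hnn : ∀ a, 0 ≤ π s [] a) (hsum : (∑ a, π s [] a) = 1)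
    (hsup : ∀ a, 0 < π s [] a → a ∈ M.act s) :
    ∑ a, ∑ s', π s [] a * M.P s a s' = 1 := by
  have h : ∀ a, ∑ s', π s [] a * M.P s a s' = π s [] a := by
    intro a
    rw [← Finset.mul_sum]
    rcases lt_or_eq_of_le (hnn a) with h | h
    · rw [M.P_sum_one s a (hsup a h), mul_one]
    · rw [← h, zero_mul]
  rw [Finset.sum_congr rfl fun a _ => h a, hsum]

lemma totalN_zero (π : S → List (A × S) → A → ℝ) (s : S) :
    totalN M π s 0 = 1 := by
  rw [totalN]
  simp [List.ofFn_zero, if_pos (show isHist M s ([] : List (A × S)) from trivial),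
    prHist, prFrom]

lemma totalN_succ {π : S → List (A × S) → A → ℝ} (s : S)
    (hnn : ∀ a, 0 ≤ π s [] a) (hsup : ∀ a, 0 < π s [] a → a ∈ M.act s) (n : ℕ) :
    totalN M π s (n + 1)
      = ∑ a, ∑ s', π s [] a * M.P s a s' * totalN M (shiftStrat π s a) s' n := by
  have := sum_decomp M π s hnn hsup (fun _ _ => True) (fun _ _ _ _ => Iff.rfl) n
  simpa [totalN, and_true] using this

lemma totalN_eq_one {π : S → List (A × S) → A → ℝ} (hπ : isStrat M π) :
    ∀ (s : S) (n : ℕ), totalN M π s n = 1 := by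
  suffices h : ∀ (n : ℕ) (π : S → List (A × S) → A → ℝ), isStrat M π →
      ∀ s, totalN M π s n = 1 by
    intro s n; exact h n π hπ s
  intro n
  induction n with
  | zero => intro π hπ s; exact totalN_zero M π s
  | succ n ih =>
      intro π hπ s
      obtain ⟨hnn, hsum, hsup⟩ := hπ s []
      have hsup' : ∀ a, 0 < π s [] a → a ∈ M.act s := hsup
      rw [totalN_succ M s hnn hsup' n]
      have : ∀ a, ∀ s', π s [] a * M.P s a s' * totalN M (shiftStrat π s a) s' n
          = π s [] a * M.P s a s' := by
        intro a s'
        rw [ih _ (isStrat_shift M hπ s a) s', mul_one]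
      rw [Finset.sum_congr rfl fun a _ => Finset.sum_congr rfl fun s' _ => this a s']
      exact sum_weights M s hnn hsum hsup'

lemma satProbN_zero (π : S → List (A × S) → A → ℝ) (U F : Set S) (s : S) :
    satProbN M π U F s 0 = if s ∈ F then 1 else 0 := by
  rw [satProbN]
  by_cases hs : s ∈ F
  · simp [List.ofFn_zero, if_pos (show isHist M s ([] : List (A × S)) from trivial),
      prHist, prFrom, (satRA_nil U F s).mpr hs, hs]
  · rw [if_neg hs]
    refine Finset.sum_eq_zero fun f _ => ?_
    rw [List.ofFn_zero, if_neg (fun h => hs ((satRA_nil U F s).mp h.2))]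

lemma satProbN_succ {π : S → List (A × S) → A → ℝ} (U F : Set S) (s : S)
    (hnn : ∀ a, 0 ≤ π s [] a) (hsup : ∀ a, 0 < π s [] a → a ∈ M.act s)
    (hs : s ∉ U ∪ F) (n : ℕ) :
    satProbN M π U F s (n + 1)
      = ∑ a, ∑ s', π s [] a * M.P s a s' *
          satProbN M (shiftStrat π s a) U F s' n := by
  exact sum_decomp M π s hnn hsup (satRA U F)
    (fun a s' l _ => satRA_cons hs s' a l) n

lemma satProbN_F {π : S → List (A × S) → A → ℝ} {U F : Set S} {s : S}
    (hs : s ∈ F) (n : ℕ) : satProbN M π U F s n = totalN M π s n := by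
  refine Finset.sum_congr rfl fun f _ => ?_
  exact if_congr (and_iff_left (satRA_of_F hs _)) rfl rfl

lemma satProbN_U {π : S → List (A × S) → A → ℝ} {U F : Set S}
    (hUF : Disjoint U F) {s : S} (hs : s ∈ U) (n : ℕ) :
    satProbN M π U F s n = 0 := by
  refine Finset.sum_eq_zero fun f _ => ?_
  rw [if_neg (fun h => not_satRA_of_U hUF hs _ h.2)]

lemma satProbN_nonneg {π : S → List (A × S) → A → ℝ}
    (hnn : ∀ s l a, 0 ≤ π s l a) (U F : Set S) (s : S) (n : ℕ) :
    0 ≤ satProbN M π U F s n := by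
  refine Finset.sum_nonneg fun f _ => ?_
  split_ifs
  · exact prHist_nonneg M hnn s _
  · exact le_rfl

lemma satProbN_le_one {π : S → List (A × S) → A → ℝ} (hπ : isStrat M π)
    (U F : Set S) (s : S) (n : ℕ) : satProbN M π U F s n ≤ 1 := by
  have hle : satProbN M π U F s n ≤ totalN M π s n := by
    refine Finset.sum_le_sum fun f _ => ?_
    have hnn := prHist_nonneg M (fun t l a => (hπ t l).1 a) s (List.ofFn f)
    split_ifs with h1 h2 h2
    · exact le_rfl
    · exact absurd h1.1 h2
    · exact hnn
    · exact le_rfl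
  rw [totalN_eq_one M hπ s n] at hle
  exact hle

lemma satProbN_mono {U F : Set S} (hUF : Disjoint U F) :
    ∀ (n : ℕ) (π : S → List (A × S) → A → ℝ), isStrat M π →
      ∀ s, satProbN M π U F s n ≤ satProbN M π U F s (n + 1) := by
  intro n
  induction n with
  | zero =>
      intro π hπ s
      rw [satProbN_zero]
      by_cases hs : s ∈ F
      · rw [if_pos hs, satProbN_F M hs, totalN_eq_one M hπ]
      · rw [if_neg hs]
        exact satProbN_nonneg M (fun t l a => (hπ t l).1 a) U F s 1
  | succ n ih =>
      intro π hπ s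
      by_cases hsF : s ∈ F
      · rw [satProbN_F M hsF, satProbN_F M hsF, totalN_eq_one M hπ,
          totalN_eq_one M hπ]
      · by_cases hsU : s ∈ U
        · rw [satProbN_U M hUF hsU, satProbN_U M hUF hsU]
        · have hs : s ∉ U ∪ F := fun h => h.elim hsU hsF
          obtain ⟨hnn, _, hsup⟩ := hπ s []
          rw [satProbN_succ M U F s hnn hsup hs n,
            satProbN_succ M U F s hnn hsup hs (n + 1)]
          refine Finset.sum_le_sum fun a _ => Finset.sum_le_sum fun s' _ => ?_
          exact mul_le_mul_of_nonneg_left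
            (ih _ (isStrat_shift M hπ s a) s')
            (mul_nonneg (hnn a) (M.P_nonneg s a s'))

end Aux3
section Aux4

open Filter Topology

variable (M : MDP S A)

lemma satProbN_bddAbove {π : S → List (A × S) → A → ℝ} (hπ : isStrat M π)
    (U F : Set S) (s : S) :
    BddAbove (Set.range fun n => satProbN M π U F s n) := by
  refine ⟨1, ?_⟩
  rintro x ⟨n, rfl⟩
  exact satProbN_le_one M hπ U F s n

lemma tendsto_satProbN {U F : Set S} (hUF : Disjoint U F)
    {π : S → List (A × S) → A → ℝ} (hπ : isStrat M π) (s : S) :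
    Tendsto (fun n => satProbN M π U F s n) atTop (𝓝 (prSat M π U F s)) :=
  tendsto_atTop_ciSup
    (monotone_nat_of_le_succ fun n => satProbN_mono M hUF n π hπ s)
    (satProbN_bddAbove M hπ U F s)

lemma satProbN_le_prSat {U F : Set S} {π : S → List (A × S) → A → ℝ}
    (hπ : isStrat M π) (s : S) (n : ℕ) :
    satProbN M π U F s n ≤ prSat M π U F s :=
  le_ciSup (satProbN_bddAbove M hπ U F s) n

lemma prSat_le_one {U F : Set S} {π : S → List (A × S) → A → ℝ}
    (hπ : isStrat M π) (s : S) : prSat M π U F s ≤ 1 :=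
  ciSup_le fun n => satProbN_le_one M hπ U F s n

lemma prSat_nonneg {U F : Set S} {π : S → List (A × S) → A → ℝ}
    (hπ : isStrat M π) (s : S) : 0 ≤ prSat M π U F s :=
  le_trans (satProbN_nonneg M (fun t l a => (hπ t l).1 a) U F s 0)
    (satProbN_le_prSat M hπ s 0)

lemma prSat_F {U F : Set S} {π : S → List (A × S) → A → ℝ}
    (hπ : isStrat M π) {s : S} (hs : s ∈ F) : prSat M π U F s = 1 := by
  have : ∀ n, satProbN M π U F s n = 1 := fun n => by
    rw [satProbN_F M hs, totalN_eq_one M hπ]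
  simp only [prSat, this]
  exact ciSup_const

lemma prSat_U {U F : Set S} (hUF : Disjoint U F)
    (π : S → List (A × S) → A → ℝ) {s : S} (hs : s ∈ U) :
    prSat M π U F s = 0 := by
  have : ∀ n, satProbN M π U F s n = 0 := fun n => satProbN_U M hUF hs n
  simp only [prSat, this]
  exact ciSup_const

lemma prSat_succ_eq {U F : Set S} (hUF : Disjoint U F)
    {π : S → List (A × S) → A → ℝ} (hπ : isStrat M π) {s : S}
    (hs : s ∉ U ∪ F) :
    prSat M π U F s
      = ∑ a, ∑ s', π s [] a * M.P s a s' *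
          prSat M (shiftStrat π s a) U F s' := by
  obtain ⟨hnn, _, hsup⟩ := hπ s []
  have h1 : Tendsto (fun n => satProbN M π U F s (n + 1)) atTop
      (𝓝 (prSat M π U F s)) :=
    (tendsto_satProbN M hUF hπ s).comp (tendsto_add_atTop_nat 1)
  have h2 : Tendsto
      (fun n => ∑ a, ∑ s', π s [] a * M.P s a s' *
        satProbN M (shiftStrat π s a) U F s' n) atTop
      (𝓝 (∑ a, ∑ s', π s [] a * M.P s a s' *
        prSat M (shiftStrat π s a) U F s')) := by
    refine tendsto_finset_sum _ fun a _ => tendsto_finset_sum _ fun s' _ => ?_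
    exact (tendsto_satProbN M hUF (isStrat_shift M hπ s a) s').const_mul _
  have heq : (fun n => satProbN M π U F s (n + 1))
      = fun n => ∑ a, ∑ s', π s [] a * M.P s a s' *
          satProbN M (shiftStrat π s a) U F s' n :=
    funext fun n => satProbN_succ M U F s hnn hsup hs n
  rw [heq] at h1
  exact tendsto_nhds_unique h1 h2

/-- The shifted strategy as a `Strategy`. -/
def Strategy.shift (π : Strategy M) (s : S) (a : A) : Strategy M where
  toFun := shiftStrat π.toFun s a
  nonneg t l b := π.nonneg s ((a, t) :: l) b
  sum_one t l := π.sum_one s ((a, t) :: l)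
  support_mem t l b hb := by
    have := π.support_mem s ((a, t) :: l) b hb
    rwa [lastState_cons] at this

/-- If `prSat = 1` at `s ∉ F`, then every one-step successor with positive
probability is almost-surely winning for the shifted strategy. -/
lemma prSat_one_step {U F : Set S} (hUF : Disjoint U F)
    {π : S → List (A × S) → A → ℝ} (hπ : isStrat M π) {s : S}
    (h1 : prSat M π U F s = 1) (hsF : s ∉ F) :
    ∀ a s', 0 < π s [] a * M.P s a s' →
      prSat M (shiftStrat π s a) U F s' = 1 := by
  have hsU : s ∉ U := by
    intro hsU
    rw [prSat_U M hUF π hsU] at h1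
    norm_num at h1
  have hs : s ∉ U ∪ F := fun h => h.elim hsU hsF
  obtain ⟨hnn, hsum, hsup⟩ := hπ s []
  have hdec := prSat_succ_eq M hUF hπ hs
  rw [h1] at hdec
  have hw : ∑ a, ∑ s', π s [] a * M.P s a s' = 1 :=
    sum_weights M s hnn hsum hsup
  have hzero : ∑ a, ∑ s', π s [] a * M.P s a s' *
      (1 - prSat M (shiftStrat π s a) U F s') = 0 := by
    have : ∀ a, ∑ s', π s [] a * M.P s a s' *
        (1 - prSat M (shiftStrat π s a) U F s')
        = (∑ s', π s [] a * M.P s a s')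
          - ∑ s', π s [] a * M.P s a s' * prSat M (shiftStrat π s a) U F s' := by
      intro a
      rw [← Finset.sum_sub_distrib]
      exact Finset.sum_congr rfl fun s' _ => by ring
    rw [Finset.sum_congr rfl fun a _ => this a, Finset.sum_sub_distrib, hw, ← hdec]
    ring
  intro a s' hpos
  have hterm : ∀ b ∈ Finset.univ (α := A), ∀ t ∈ Finset.univ (α := S),
      0 ≤ π s [] b * M.P s b t * (1 - prSat M (shiftStrat π s b) U F t) := by
    intro b _ t _
    refine mul_nonneg (mul_nonneg (hnn b) (M.P_nonneg s b t)) ?_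
    have := prSat_le_one M (isStrat_shift M hπ s b) t (U := U) (F := F)
    linarith
  have hz : π s [] a * M.P s a s' *
      (1 - prSat M (shiftStrat π s a) U F s') = 0 := by
    have houter : ∀ b ∈ Finset.univ (α := A),
        0 ≤ ∑ t, π s [] b * M.P s b t * (1 - prSat M (shiftStrat π s b) U F t) :=
      fun b hb => Finset.sum_nonneg (fun t ht => hterm b hb t ht)
    have h1' := (Finset.sum_eq_zero_iff_of_nonneg houter).mp hzero a
      (Finset.mem_univ a)
    have h2' := (Finset.sum_eq_zero_iff_of_nonneg
      (fun t ht => hterm a (Finset.mem_univ a) t ht)).mp h1' s' (Finset.mem_univ s')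
    exact h2'
  have := mul_eq_zero.mp hz
  rcases this with h | h
  · exact absurd h (ne_of_gt hpos)
  · linarith

end Aux4
section Aux5

variable (M : MDP S A)

/-- Attractor levels towards `F` inside `ASW`. -/
def attrN (U F : Set S) : ℕ → Set S
  | 0 => ASW M U F ∩ F
  | n + 1 => attrN U F n ∪
      {s | s ∈ ASW M U F ∧ ∃ a ∈ M.act s, post M s a ⊆ ASW M U F ∧
        (post M s a ∩ attrN U F n).Nonempty}

lemma attrN_subset_ASW (U F : Set S) : ∀ n, attrN M U F n ⊆ ASW M U F := by
  intro n
  induction n with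
  | zero => exact Set.inter_subset_left
  | succ n ih =>
      intro t ht
      rcases ht with h | h
      · exact ih h
      · exact h.1

/-- The rank of a state: the least attractor level containing it. -/
noncomputable def rankF (U F : Set S) (s : S) : ℕ :=
  sInf {n | s ∈ attrN M U F n}

lemma ASW_not_U {U F : Set S} (hUF : Disjoint U F) {s : S}
    (hs : s ∈ ASW M U F) : s ∉ U := by
  intro hsU
  obtain ⟨π, hπ⟩ := hs
  rw [prSat_U M hUF π.toFun hsU] at hπ
  norm_num at hπ

lemma asw_subset_attr {U F : Set S} (hUF : Disjoint U F) :
    ASW M U F ⊆ ⋃ n, attrN M U F n := by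
  have key : ∀ (n : ℕ) (π : Strategy M) (s : S), prSat M π.toFun U F s = 1 →
      s ∉ ⋃ m, attrN M U F m → satProbN M π.toFun U F s n = 0 := by
    intro n
    induction n with
    | zero =>
        intro π s h1 hnot
        rw [satProbN_zero, if_neg]
        intro hsF
        exact hnot (Set.mem_iUnion.mpr ⟨0, ⟨⟨π, h1⟩, hsF⟩⟩)
    | succ n ih =>
        intro π s h1 hnot
        have hπ := π.isStrat_toFun M
        have hsF : s ∉ F := fun hsF =>
          hnot (Set.mem_iUnion.mpr ⟨0, ⟨⟨π, h1⟩, hsF⟩⟩)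
        have hsU : s ∉ U := by
          intro hsU
          rw [prSat_U M hUF π.toFun hsU] at h1
          norm_num at h1
        have hs : s ∉ U ∪ F := fun h => h.elim hsU hsF
        obtain ⟨hnn, _, hsup⟩ := hπ s []
        rw [satProbN_succ M U F s hnn hsup hs n]
        refine Finset.sum_eq_zero fun a _ => Finset.sum_eq_zero fun s' _ => ?_
        by_cases hw : 0 < π.toFun s [] a * M.P s a s'
        · have hπa : 0 < π.toFun s [] a := by
            rcases lt_or_eq_of_le (hnn a) with h | h
            · exact h
            · rw [← h, zero_mul] at hw; exact absurd hw (lt_irrefl 0)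
          have hP : 0 < M.P s a s' := by
            rcases lt_or_eq_of_le (M.P_nonneg s a s') with h | h
            · exact h
            · rw [← h, mul_zero] at hw; exact absurd hw (lt_irrefl 0)
          have hshift := prSat_one_step M hUF hπ h1 hsF a s' hw
          have hpostASW : post M s a ⊆ ASW M U F := by
            intro t ht
            have hwt : 0 < π.toFun s [] a * M.P s a t := mul_pos hπa ht
            exact ⟨π.shift M s a, prSat_one_step M hUF hπ h1 hsF a t hwt⟩
          have hs'notin : s' ∉ ⋃ m, attrN M U F m := by
            intro hmem
            obtain ⟨m, hm⟩ := Set.mem_iUnion.mp hmem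
            refine hnot (Set.mem_iUnion.mpr ⟨m + 1, Or.inr ?_⟩)
            exact ⟨⟨π, h1⟩, a, hsup a hπa, hpostASW, ⟨s', hP, hm⟩⟩
          have := ih (π.shift M s a) s' hshift hs'notin
          rw [show (π.shift M s a).toFun = shiftStrat π.toFun s a from rfl] at this
          rw [this, mul_zero]
        · have : π.toFun s [] a * M.P s a s' = 0 :=
            le_antisymm (not_lt.mp hw) (mul_nonneg (hnn a) (M.P_nonneg s a s'))
          rw [this, zero_mul]
  intro s hs
  by_contra hnot
  obtain ⟨π, h1⟩ := hs
  have : ∀ n, satProbN M π.toFun U F s n = 0 := fun n => key n π s h1 hnot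
  have : prSat M π.toFun U F s = 0 := by
    simp only [prSat, this]
    exact ciSup_const
  rw [this] at h1
  norm_num at h1

lemma forward_dir {U F : Set S} (hUF : Disjoint U F) {s : S}
    (hs : s ∈ ASW M U F) :
    ∃ (W : Set S) (r : S → ℕ), rankWitness M U F W r ∧ s ∈ W := by
  refine ⟨ASW M U F, rankF M U F, ⟨?_, ?_⟩, hs⟩
  · ext t
    simp only [Set.mem_inter_iff, Set.mem_empty_iff_false, iff_false, not_and]
    exact fun ht => ASW_not_U M hUF ht
  · intro t ht
    have hne : t ∈ ⋃ n, attrN M U F n := asw_subset_attr M hUF ht.1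
    obtain ⟨n0, hn0⟩ := Set.mem_iUnion.mp hne
    have hnonempty : {n | t ∈ attrN M U F n}.Nonempty := ⟨n0, hn0⟩
    have hk : t ∈ attrN M U F (rankF M U F t) := Nat.sInf_mem hnonempty
    rcases hrk : rankF M U F t with _ | m
    · rw [hrk] at hk
      exact absurd hk.2 ht.2
    · rw [hrk] at hk
      rcases hk with hk | hk
      · exfalso
        have := Nat.sInf_le (show m ∈ {n | t ∈ attrN M U F n} from hk)
        rw [show sInf {n | t ∈ attrN M U F n} = rankF M U F t from rfl, hrk] at this
        omega
      · obtain ⟨_, a, ha, hpost, u, hupost, huattr⟩ := hk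
        refine ⟨a, ha, hpost, ⟨u, hupost, ?_⟩⟩
        refine ⟨attrN_subset_ASW M U F m huattr, ?_⟩
        have : rankF M U F u ≤ m := Nat.sInf_le huattr
        omega

end Aux5
section Aux6

variable (M : MDP S A)

lemma backward_dir {U F W : Set S} {r : S → ℕ} (hUF : Disjoint U F)
    (hW : rankWitness M U F W r) {s : S} (hsW : s ∈ W) : s ∈ ASW M U F := by
  classical
  -- choose an action for every state
  have hact : ∀ t, ∃ a, a ∈ M.act t ∧ (t ∈ W \ F → post M t a ⊆ W ∧
      (post M t a ∩ {u ∈ W | r u < r t}).Nonempty) := by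
    intro t
    by_cases ht : t ∈ W \ F
    · obtain ⟨a, ha, h2⟩ := hW.2 t ht
      exact ⟨a, ha, fun _ => h2⟩
    · obtain ⟨a, ha⟩ := M.act_nonempty t
      exact ⟨a, ha, fun h => absurd h ht⟩
  choose c hc1 hc2 using hact
  -- the deterministic Markov strategy playing `c`
  let σ : MarkovStrategy M :=
    { toFun := fun t b => if b = c t then 1 else 0
      nonneg := by intro t b; split_ifs <;> norm_num
      sum_one := by intro t; simp
      support_mem := by
        intro t b hb
        by_cases h : b = c t
        · rw [h]; exact hc1 t
        · simp only [if_neg h] at hb; norm_num at hb }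
  set π : Strategy M := σ.strat with hπdef
  have hπ : isStrat M π.toFun := π.isStrat_toFun M
  have hshift : ∀ t a, shiftStrat π.toFun t a = π.toFun := by
    intro t a
    funext u l b
    show σ.toFun (lastState t ((a, u) :: l)) b = σ.toFun (lastState u l) b
    rw [lastState_cons]
  set Q : S → ℝ := prSat M π.toFun U F with hQdef
  have hnotU : ∀ t ∈ W, t ∉ U := fun t htW htU =>
    Set.eq_empty_iff_forall_notMem.mp hW.1 t ⟨htW, htU⟩
  have hrec : ∀ t ∈ W, t ∉ F → Q t = ∑ s', M.P t (c t) s' * Q s' := by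
    intro t htW htF
    have hs : t ∉ U ∪ F := fun h => h.elim (hnotU t htW) htF
    rw [hQdef, prSat_succ_eq M hUF hπ hs]
    simp only [hshift]
    have hinner : ∀ a, (∑ s', π.toFun t [] a * M.P t a s' * prSat M π.toFun U F s')
        = if a = c t then ∑ s', M.P t (c t) s' * prSat M π.toFun U F s' else 0 := by
      intro a
      have hπt : π.toFun t [] a = if a = c t then 1 else 0 := rfl
      split_ifs with h
      · subst h
        refine Finset.sum_congr rfl fun s' _ => ?_
        rw [hπt, if_pos rfl, one_mul]
      · refine Finset.sum_eq_zero fun s' _ => ?_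
        rw [hπt, if_neg h, zero_mul, zero_mul]
    rw [Finset.sum_congr rfl fun a _ => hinner a, Finset.sum_ite_eq'
      (Finset.univ : Finset A) (c t)
      (fun _ => ∑ s', M.P t (c t) s' * prSat M π.toFun U F s'),
      if_pos (Finset.mem_univ (c t))]
  -- minimum of Q over W
  set T : Finset S := (Set.toFinite W).toFinset with hTdef
  have hmemT : ∀ t, t ∈ T ↔ t ∈ W := fun t => Set.Finite.mem_toFinset _
  have hTne : T.Nonempty := ⟨s, (hmemT s).mpr hsW⟩
  set m : ℝ := T.inf' hTne Q with hmdef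
  have hmle : ∀ t ∈ W, m ≤ Q t := fun t ht => Finset.inf'_le Q ((hmemT t).mpr ht)
  obtain ⟨t0, ht0, hm0⟩ := T.exists_mem_eq_inf' hTne Q
  set K : Finset S := T.filter (fun t => Q t = m) with hKdef
  have hKne : K.Nonempty := ⟨t0, Finset.mem_filter.mpr ⟨ht0, hm0.symm⟩⟩
  obtain ⟨tm, htmK, hmin⟩ := K.exists_min_image r hKne
  have htmW : tm ∈ W := (hmemT tm).mp (Finset.mem_filter.mp htmK).1
  have hQtm : Q tm = m := (Finset.mem_filter.mp htmK).2
  by_cases htmF : tm ∈ F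
  · -- minimum is 1, hence Q s = 1
    have hm1 : m = 1 := by rw [← hQtm, hQdef]; exact prSat_F M hπ htmF
    have hQs : Q s = 1 :=
      le_antisymm (prSat_le_one M hπ s) (hm1 ▸ hmle s hsW)
    exact ⟨π, hQs⟩
  · exfalso
    obtain ⟨hpostW, u, hupost, huW, hur⟩ := hc2 tm ⟨htmW, htmF⟩
    have hQu_ge : m ≤ Q u := hmle u huW
    have hQu_ne : Q u ≠ m := by
      intro h
      have huK : u ∈ K := Finset.mem_filter.mpr ⟨(hmemT u).mpr huW, h⟩
      have := hmin u huK
      omega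
    have hQu : m < Q u := lt_of_le_of_ne hQu_ge (Ne.symm hQu_ne)
    have hsum1 : ∑ s', M.P tm (c tm) s' = 1 := M.P_sum_one tm (c tm) (hc1 tm)
    have hposs : 0 < ∑ s', M.P tm (c tm) s' * (Q s' - m) := by
      refine Finset.sum_pos' ?_ ⟨u, Finset.mem_univ u, ?_⟩
      · intro t _
        rcases lt_or_eq_of_le (M.P_nonneg tm (c tm) t) with h | h
        · have : m ≤ Q t := hmle t (hpostW h)
          exact mul_nonneg h.le (by linarith)
        · rw [← h, zero_mul]
      · exact mul_pos hupost (by linarith)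
    have hdiff : ∑ s', M.P tm (c tm) s' * (Q s' - m) = Q tm - m := by
      have h1 : ∀ t : S, M.P tm (c tm) t * (Q t - m)
          = M.P tm (c tm) t * Q t - M.P tm (c tm) t * m := fun t => by ring
      rw [Finset.sum_congr rfl fun t _ => h1 t, Finset.sum_sub_distrib,
        ← hrec tm htmW htmF, ← Finset.sum_mul, hsum1, one_mul]
    rw [hdiff, hQtm] at hposs
    linarith

end Aux6
/-- `s ∈ ASW(¬U 𝖴 F)` iff there is a ranking witness `(W, r)` for
`¬U 𝖴 F` with `s ∈ W`. -/
theorem mem_ASW_iff_rankWitness (M : MDP S A) (U F : Set S) (hUF : Disjoint U F)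
    (s : S) :
    s ∈ ASW M U F ↔ ∃ (W : Set S) (r : S → ℕ), rankWitness M U F W r ∧ s ∈ W := by
  constructor
  · intro hs
    exact forward_dir M hUF hs
  · rintro ⟨W, r, hW, hsW⟩
    exact backward_dir M hUF hW hsW
end

section
/- Let M = (S, A, s0, P) be a finite MDP, φ = ¬U 𝖴 F a reach-avoid objective with U, F ⊆ S disjoint, and (W, r) a ranking witness for φ. Let π be any Markov strategy on M such that for every s ∈ W \ F: Supp(π(s)) ⊆ {a ∈ A(s) : Post(s,a) ⊆ W}, and Supp(π(s)) contains at least one action a with Post(s,a) ∩ {t ∈ W : r(t) < r(s)} ≠ ∅. Then π is almost-sure winning from every s ∈ W for φ. -/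
open scoped BigOperators Classical

variable {S A : Type} [Fintype S] [Fintype A]

/-! ### Auxiliary development for Statement 4 -/

/-- Probability of a path under a Markov strategy, tracking only the current state. -/
noncomputable def prM (M : MDP S A) (σ : MarkovStrategy M) : S → List (A × S) → ℝ
  | _, [] => 1
  | s, (a, s') :: rest => σ.toFun s a * M.P s a s' * prM M σ s' rest

lemma RA_lastState_nil (s : S) : lastState s ([] : List (A × S)) = s := rfl

lemma RA_lastState_append (s : S) (pre : List (A × S)) (a : A) (s' : S) :
    lastState s (pre ++ [(a, s')]) = s' := by
  simp [lastState]

lemma RA_prFrom_eq_prM (M : MDP S A) (σ : MarkovStrategy M) (l : List (A × S)) :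
    ∀ (pre : List (A × S)) (s0 : S),
      prFrom M σ.strat.toFun s0 pre l = prM M σ (lastState s0 pre) l := by
  induction l with
  | nil => intro pre s0; rfl
  | cons p rest ih =>
    intro pre s0
    obtain ⟨a, s'⟩ := p
    rw [show prFrom M σ.strat.toFun s0 pre ((a, s') :: rest) =
          σ.strat.toFun s0 pre a * M.P (lastState s0 pre) a s' *
            prFrom M σ.strat.toFun s0 (pre ++ [(a, s')]) rest from rfl,
        ih, RA_lastState_append]
    rfl

lemma RA_prHist_eq_prM (M : MDP S A) (σ : MarkovStrategy M) (s : S) (l : List (A × S)) :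
    prHist M σ.strat.toFun s l = prM M σ s l := by
  rw [prHist, RA_prFrom_eq_prM, RA_lastState_nil]

lemma RA_sum_ofFn_succ {β : Type} [Fintype β] (n : ℕ) (g : List β → ℝ) :
    ∑ f : Fin (n + 1) → β, g (List.ofFn f)
      = ∑ p : β, ∑ f : Fin n → β, g (p :: List.ofFn f) := by
  rw [← (Fin.consEquiv fun _ : Fin (n + 1) => β).sum_comp fun f => g (List.ofFn f)]
  rw [Fintype.sum_prod_type]
  refine Finset.sum_congr rfl fun p _ => Finset.sum_congr rfl fun f _ => ?_
  congr 1
  simp [Fin.consEquiv, List.ofFn_succ]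

lemma RA_sum_sp (M : MDP S A) (σ : MarkovStrategy M) (s : S) :
    ∑ p : A × S, σ.toFun s p.1 * M.P s p.1 p.2 = 1 := by
  rw [Fintype.sum_prod_type]
  have h : ∀ a : A, ∑ s' : S, σ.toFun s a * M.P s a s' = σ.toFun s a := by
    intro a
    rw [← Finset.mul_sum]
    rcases (σ.nonneg s a).eq_or_lt with h | h
    · rw [← h]; ring
    · rw [M.P_sum_one s a (σ.support_mem s a h), mul_one]
  rw [Finset.sum_congr rfl fun a _ => h a, σ.sum_one]

lemma RA_tot (M : MDP S A) (σ : MarkovStrategy M) :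
    ∀ (n : ℕ) (s : S), ∑ f : Fin n → A × S, prM M σ s (List.ofFn f) = 1 := by
  intro n
  induction n with
  | zero =>
    intro s
    simp [List.ofFn_zero, prM, Finset.sum_const, Finset.card_univ]
  | succ n ih =>
    intro s
    rw [RA_sum_ofFn_succ]
    have h : ∀ p : A × S, ∑ f : Fin n → A × S, prM M σ s (p :: List.ofFn f)
        = σ.toFun s p.1 * M.P s p.1 p.2 := by
      rintro ⟨a, s'⟩
      simp only [prM]
      rw [← Finset.mul_sum, ih s', mul_one]
    rw [Finset.sum_congr rfl fun p _ => h p, RA_sum_sp]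

noncomputable def badP (M : MDP S A) (σ : MarkovStrategy M) (W F : Set S) : ℕ → S → ℝ
  | 0, s => if s ∈ W \ F then 1 else 0
  | n + 1, s => if s ∈ W \ F then
      ∑ p : A × S, σ.toFun s p.1 * M.P s p.1 p.2 * badP M σ W F n p.2 else 0

lemma RA_badP_zero_outside (M : MDP S A) (σ : MarkovStrategy M) (W F : Set S)
    (n : ℕ) {s : S} (hs : s ∉ W \ F) : badP M σ W F n s = 0 := by
  cases n <;> simp [badP, hs]

lemma RA_badP_nonneg (M : MDP S A) (σ : MarkovStrategy M) (W F : Set S) :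
    ∀ (n : ℕ) (s : S), 0 ≤ badP M σ W F n s := by
  intro n
  induction n with
  | zero => intro s; simp only [badP]; split_ifs <;> norm_num
  | succ n ih =>
    intro s
    simp only [badP]
    split_ifs
    · exact Finset.sum_nonneg fun p _ =>
        mul_nonneg (mul_nonneg (σ.nonneg _ _) (M.P_nonneg _ _ _)) (ih p.2)
    · exact le_refl 0

lemma RA_badP_le_one (M : MDP S A) (σ : MarkovStrategy M) (W F : Set S) :
    ∀ (n : ℕ) (s : S), badP M σ W F n s ≤ 1 := by
  intro n
  induction n with
  | zero => intro s; simp only [badP]; split_ifs <;> norm_num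
  | succ n ih =>
    intro s
    simp only [badP]
    split_ifs
    · calc ∑ p : A × S, σ.toFun s p.1 * M.P s p.1 p.2 * badP M σ W F n p.2
          ≤ ∑ p : A × S, σ.toFun s p.1 * M.P s p.1 p.2 := by
            refine Finset.sum_le_sum fun p _ => ?_
            have := mul_le_mul_of_nonneg_left (ih p.2)
              (mul_nonneg (σ.nonneg s p.1) (M.P_nonneg s p.1 p.2))
            simpa using this
        _ = 1 := RA_sum_sp M σ s
    · norm_num

lemma RA_badP_succ_le (M : MDP S A) (σ : MarkovStrategy M) (W F : Set S) :
    ∀ (n : ℕ) (s : S), badP M σ W F (n + 1) s ≤ badP M σ W F n s := by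
  intro n
  induction n with
  | zero =>
    intro s
    by_cases hs : s ∈ W \ F
    · simp only [badP, if_pos hs]
      calc ∑ p : A × S, σ.toFun s p.1 * M.P s p.1 p.2 * badP M σ W F 0 p.2
          ≤ ∑ p : A × S, σ.toFun s p.1 * M.P s p.1 p.2 := by
            refine Finset.sum_le_sum fun p _ => ?_
            have := mul_le_mul_of_nonneg_left (RA_badP_le_one M σ W F 0 p.2)
              (mul_nonneg (σ.nonneg s p.1) (M.P_nonneg s p.1 p.2))
            simpa using this
        _ = 1 := RA_sum_sp M σ s
    · simp [badP, hs]
  | succ n ih =>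
    intro s
    by_cases hs : s ∈ W \ F
    · simp only [badP, if_pos hs]
      exact Finset.sum_le_sum fun p _ => mul_le_mul_of_nonneg_left (ih p.2)
        (mul_nonneg (σ.nonneg s p.1) (M.P_nonneg s p.1 p.2))
    · simp [badP, hs]

lemma RA_badP_antitone (M : MDP S A) (σ : MarkovStrategy M) (W F : Set S) (s : S) :
    Antitone fun n => badP M σ W F n s :=
  antitone_nat_of_succ_le fun n => RA_badP_succ_le M σ W F n s

lemma RA_badSum_eq (M : MDP S A) (σ : MarkovStrategy M) (W F : Set S) :
    ∀ (n : ℕ) (s : S),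
      (∑ f : Fin n → A × S,
        if s ∈ W \ F ∧ ∀ p ∈ List.ofFn f, p.2 ∈ W \ F
        then prM M σ s (List.ofFn f) else 0) = badP M σ W F n s := by
  intro n
  induction n with
  | zero =>
    intro s
    simp [List.ofFn_zero, prM, badP, Finset.sum_const, Finset.card_univ]
  | succ n ih =>
    intro s
    rw [RA_sum_ofFn_succ n
      (fun L => if s ∈ W \ F ∧ ∀ p ∈ L, p.2 ∈ W \ F then prM M σ s L else 0)]
    by_cases hs : s ∈ W \ F
    · have hterm : ∀ (p : A × S) (f : Fin n → A × S),
          (if s ∈ W \ F ∧ ∀ q ∈ p :: List.ofFn f, q.2 ∈ W \ F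
            then prM M σ s (p :: List.ofFn f) else 0)
          = σ.toFun s p.1 * M.P s p.1 p.2 *
            (if p.2 ∈ W \ F ∧ ∀ q ∈ List.ofFn f, q.2 ∈ W \ F
              then prM M σ p.2 (List.ofFn f) else 0) := by
        rintro ⟨a, s'⟩ f
        by_cases hc : (a, s').2 ∈ W \ F ∧ ∀ q ∈ List.ofFn f, q.2 ∈ W \ F
        · rw [if_pos hc, if_pos]
          · rfl
          · refine ⟨hs, ?_⟩
            intro q hq
            rcases List.mem_cons.mp hq with rfl | hq'
            · exact hc.1
            · exact hc.2 q hq'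
        · rw [if_neg hc, if_neg, mul_zero]
          rintro ⟨-, hall⟩
          exact hc ⟨hall (a, s') (List.mem_cons_self), fun q hq => hall q (List.mem_cons_of_mem _ hq)⟩
      rw [Finset.sum_congr rfl fun p _ => Finset.sum_congr rfl fun f _ => hterm p f]
      have h2 : ∀ p : A × S,
          (∑ f : Fin n → A × S, σ.toFun s p.1 * M.P s p.1 p.2 *
            (if p.2 ∈ W \ F ∧ ∀ q ∈ List.ofFn f, q.2 ∈ W \ F
              then prM M σ p.2 (List.ofFn f) else 0))
          = σ.toFun s p.1 * M.P s p.1 p.2 * badP M σ W F n p.2 := by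
        intro p
        rw [← Finset.mul_sum, ih p.2]
      rw [Finset.sum_congr rfl fun p _ => h2 p]
      simp [badP, hs]
    · have : ∀ (p : A × S) (f : Fin n → A × S),
          (if s ∈ W \ F ∧ ∀ q ∈ p :: List.ofFn f, q.2 ∈ W \ F
            then prM M σ s (p :: List.ofFn f) else 0) = 0 :=
        fun p f => if_neg fun h => hs h.1
      simp only [this, Finset.sum_const_zero, RA_badP_zero_outside M σ W F _ hs]

lemma RA_isHist_of_prM_ne (M : MDP S A) (σ : MarkovStrategy M) :
    ∀ (l : List (A × S)) (s : S), prM M σ s l ≠ 0 → isHist M s l := by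
  intro l
  induction l with
  | nil => intro s _; trivial
  | cons p rest ih =>
    obtain ⟨a, s'⟩ := p
    intro s h0
    rw [prM] at h0
    have h1 : σ.toFun s a ≠ 0 := fun h => h0 (by rw [h]; ring)
    have h2 : M.P s a s' ≠ 0 := fun h => h0 (by rw [h]; ring)
    have h3 : prM M σ s' rest ≠ 0 := fun h => h0 (by rw [h]; ring)
    exact ⟨σ.support_mem s a ((σ.nonneg s a).lt_of_ne (Ne.symm h1)),
      (M.P_nonneg s a s').lt_of_ne (Ne.symm h2), ih s' h3⟩

lemma RA_stateAt_cons (s : S) (a : A) (s' : S) (l : List (A × S)) {k : ℕ}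
    (hk : k ≤ l.length) :
    stateAt s ((a, s') :: l) (k + 1) = stateAt s' l k := by
  cases k with
  | zero => simp [stateAt]
  | succ j =>
    have hj : j < l.length := by omega
    simp [stateAt, List.getElem?_cons_succ, List.getElem?_eq_getElem hj]

lemma RA_stateAt_mem (s : S) (l : List (A × S)) (k : ℕ) :
    stateAt s l k = s ∨ ∃ p ∈ l, stateAt s l k = p.2 := by
  cases k with
  | zero => exact Or.inl rfl
  | succ j =>
    cases h : l[j]? with
    | none => left; simp [stateAt, h]
    | some p =>
      right
      exact ⟨p, List.mem_of_getElem? h, by simp [stateAt, h]⟩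

lemma RA_not_both {U F W : Set S} {s : S} {l : List (A × S)}
    (hsat : satRA U F s l) (h1 : s ∈ W \ F) (h2 : ∀ p ∈ l, p.2 ∈ W \ F) : False := by
  obtain ⟨k, -, hkF, -⟩ := hsat
  rcases RA_stateAt_mem s l k with he | ⟨p, hp, he⟩
  · rw [he] at hkF; exact h1.2 hkF
  · rw [he] at hkF; exact (h2 p hp).2 hkF

lemma RA_prM_cases (M : MDP S A) (σ : MarkovStrategy M) (U F W : Set S)
    (hWU : W ∩ U = ∅)
    (hsupp : ∀ s ∈ W \ F,
      {a | 0 < σ.toFun s a} ⊆ {a | a ∈ M.act s ∧ post M s a ⊆ W}) :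
    ∀ (l : List (A × S)) (s : S), s ∈ W → prM M σ s l ≠ 0 →
      satRA U F s l ∨ (s ∈ W \ F ∧ ∀ p ∈ l, p.2 ∈ W \ F) := by
  intro l
  induction l with
  | nil =>
    intro s hsW _
    by_cases hF : s ∈ F
    · exact Or.inl ⟨0, Nat.zero_le _, hF, fun i hi => absurd hi (Nat.not_lt_zero i)⟩
    · exact Or.inr ⟨⟨hsW, hF⟩, by simp⟩
  | cons p rest ih =>
    obtain ⟨a, s'⟩ := p
    intro s hsW h0
    rw [prM] at h0
    have h1 : σ.toFun s a ≠ 0 := fun h => h0 (by rw [h]; ring)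
    have h2 : M.P s a s' ≠ 0 := fun h => h0 (by rw [h]; ring)
    have h3 : prM M σ s' rest ≠ 0 := fun h => h0 (by rw [h]; ring)
    have hσ : 0 < σ.toFun s a := (σ.nonneg s a).lt_of_ne (Ne.symm h1)
    have hP : 0 < M.P s a s' := (M.P_nonneg s a s').lt_of_ne (Ne.symm h2)
    by_cases hF : s ∈ F
    · exact Or.inl ⟨0, Nat.zero_le _, hF, fun i hi => absurd hi (Nat.not_lt_zero i)⟩
    · have hsWF : s ∈ W \ F := ⟨hsW, hF⟩
      have hsU : s ∉ U := fun hU =>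
        (Set.eq_empty_iff_forall_notMem.mp hWU s) ⟨hsW, hU⟩
      have hpost := (hsupp s hsWF hσ).2
      have hs'W : s' ∈ W := hpost hP
      rcases ih s' hs'W h3 with hsat | hstay
      · left
        obtain ⟨k, hk, hkF, hkU⟩ := hsat
        refine ⟨k + 1, by simpa using Nat.succ_le_succ hk, ?_, ?_⟩
        · rw [RA_stateAt_cons s a s' rest hk]; exact hkF
        · intro i hi
          cases i with
          | zero =>
            show stateAt s ((a, s') :: rest) 0 ∉ U ∪ F
            rintro (hU | hF')
            · exact hsU hU
            · exact hF hF'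
          | succ j =>
            have hj : j < k := Nat.lt_of_succ_lt_succ hi
            rw [RA_stateAt_cons s a s' rest (le_trans (le_of_lt hj) hk)]
            exact hkU j hj
      · right
        refine ⟨hsWF, fun q hq => ?_⟩
        rcases List.mem_cons.mp hq with rfl | hq'
        · exact hstay.1
        · exact hstay.2 q hq'

lemma RA_decompose (M : MDP S A) (σ : MarkovStrategy M) (U F W : Set S)
    (hWU : W ∩ U = ∅)
    (hsupp : ∀ s ∈ W \ F,
      {a | 0 < σ.toFun s a} ⊆ {a | a ∈ M.act s ∧ post M s a ⊆ W})
    {s : S} (hsW : s ∈ W) (l : List (A × S)) :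
    (if isHist M s l ∧ satRA U F s l then prM M σ s l else 0)
      = prM M σ s l -
        (if s ∈ W \ F ∧ ∀ p ∈ l, p.2 ∈ W \ F then prM M σ s l else 0) := by
  by_cases h0 : prM M σ s l = 0
  · rw [h0]; split_ifs <;> simp
  · rcases RA_prM_cases M σ U F W hWU hsupp l s hsW h0 with hsat | hstay
    · rw [if_pos ⟨RA_isHist_of_prM_ne M σ l s h0, hsat⟩, if_neg, sub_zero]
      rintro ⟨ha, hb⟩
      exact RA_not_both hsat ha hb
    · rw [if_pos hstay, if_neg, sub_self]
      rintro ⟨-, hsat⟩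
      exact RA_not_both hsat hstay.1 hstay.2

lemma RA_key (M : MDP S A) (σ : MarkovStrategy M) (U F W : Set S)
    (hWU : W ∩ U = ∅)
    (hsupp : ∀ s ∈ W \ F,
      {a | 0 < σ.toFun s a} ⊆ {a | a ∈ M.act s ∧ post M s a ⊆ W})
    {s : S} (hsW : s ∈ W) (n : ℕ) :
    satProbN M σ.strat.toFun U F s n = 1 - badP M σ W F n s := by
  unfold satProbN
  simp only [RA_prHist_eq_prM]
  rw [Finset.sum_congr rfl fun f _ => RA_decompose M σ U F W hWU hsupp hsW (List.ofFn f)]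
  rw [Finset.sum_sub_distrib, RA_tot, RA_badSum_eq]

lemma RA_badP_comp (M : MDP S A) (σ : MarkovStrategy M) (W F : Set S)
    (m : ℕ) (c : ℝ) (hc : 0 ≤ c) (h : ∀ t, badP M σ W F m t ≤ c) :
    ∀ (n : ℕ) (s : S), badP M σ W F (n + m) s ≤ c * badP M σ W F n s := by
  intro n
  induction n with
  | zero =>
    intro s
    by_cases hs : s ∈ W \ F
    · rw [Nat.zero_add]
      simpa [badP, hs] using h s
    · rw [RA_badP_zero_outside M σ W F _ hs, RA_badP_zero_outside M σ W F _ hs, mul_zero]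
  | succ n ih =>
    intro s
    by_cases hs : s ∈ W \ F
    · have he : n + 1 + m = (n + m) + 1 := by omega
      rw [he]
      simp only [badP, if_pos hs]
      calc ∑ p : A × S, σ.toFun s p.1 * M.P s p.1 p.2 * badP M σ W F (n + m) p.2
          ≤ ∑ p : A × S, σ.toFun s p.1 * M.P s p.1 p.2 * (c * badP M σ W F n p.2) :=
            Finset.sum_le_sum fun p _ => mul_le_mul_of_nonneg_left (ih p.2)
              (mul_nonneg (σ.nonneg s p.1) (M.P_nonneg s p.1 p.2))
        _ = c * ∑ p : A × S, σ.toFun s p.1 * M.P s p.1 p.2 * badP M σ W F n p.2 := by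
            rw [Finset.mul_sum]
            exact Finset.sum_congr rfl fun p _ => by ring
    · rw [RA_badP_zero_outside M σ W F _ hs, RA_badP_zero_outside M σ W F _ hs, mul_zero]
/-- given a ranking witness `(W, r)`, any Markov strategy whose support at
every `s ∈ W \ F` consists of enabled actions keeping the play in `W` and contains a
rank-decreasing action is almost-sure winning from every `s ∈ W`. -/
theorem rankWitness_strategy_ASW (M : MDP S A) (U F : Set S) (hUF : Disjoint U F)
    (W : Set S) (r : S → ℕ) (hW : rankWitness M U F W r)
    (σ : MarkovStrategy M)
    (hsupp : ∀ s ∈ W \ F,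
      {a | 0 < σ.toFun s a} ⊆ {a | a ∈ M.act s ∧ post M s a ⊆ W})
    (hprog : ∀ s ∈ W \ F, ∃ a, 0 < σ.toFun s a ∧
      (post M s a ∩ {t ∈ W | r t < r s}).Nonempty) :
    ∀ s ∈ W, prSat M σ.strat.toFun U F s = 1 := by
  intro s hsW
  have hWU : W ∩ U = ∅ := hW.1
  have hkey : ∀ n, satProbN M σ.strat.toFun U F s n = 1 - badP M σ W F n s :=
    fun n => RA_key M σ U F W hWU hsupp hsW n
  have hto : ∀ η : ℝ, 0 < η → ∃ n, badP M σ W F n s < η := by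
    intro η hη
    by_cases hsF : s ∈ F
    · exact ⟨0, by rw [RA_badP_zero_outside M σ W F 0 (fun h => h.2 hsF)]; exact hη⟩
    · have hsWF : s ∈ W \ F := ⟨hsW, hsF⟩
      have hex : ∀ t, t ∈ W \ F → ∃ a : A, ∃ u : S,
          0 < σ.toFun t a ∧ 0 < M.P t a u ∧ u ∈ W ∧ r u < r t := by
        intro t ht
        obtain ⟨a, ha, hne⟩ := hprog t ht
        obtain ⟨u, hu⟩ := hne
        exact ⟨a, u, ha, hu.1, hu.2.1, hu.2.2⟩
      classical
      set g : S → ℝ := fun t =>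
        if ht : t ∈ W \ F then
          σ.toFun t (hex t ht).choose * M.P t (hex t ht).choose (hex t ht).choose_spec.choose
        else 1 with hg
      have hg_pos : ∀ t, 0 < g t := by
        intro t
        rw [hg]; dsimp only
        split_ifs with ht
        · exact mul_pos (hex t ht).choose_spec.choose_spec.1
            (hex t ht).choose_spec.choose_spec.2.1
        · norm_num
      haveI : Nonempty S := ⟨s⟩
      set ε : ℝ := min 1 (Finset.univ.inf' Finset.univ_nonempty g) with hεdef
      have hε_pos : 0 < ε := lt_min one_pos (by
        rw [Finset.lt_inf'_iff]; exact fun t _ => hg_pos t)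
      have hε1 : ε ≤ 1 := min_le_left _ _
      have hε_le : ∀ t, ε ≤ g t := fun t =>
        le_trans (min_le_right _ _) (Finset.inf'_le g (Finset.mem_univ t))
      have hg_spec : ∀ t, t ∈ W \ F → ∃ a u, ε ≤ σ.toFun t a * M.P t a u ∧
          0 < σ.toFun t a ∧ u ∈ W ∧ r u < r t := by
        intro t ht
        refine ⟨(hex t ht).choose, (hex t ht).choose_spec.choose, ?_,
          (hex t ht).choose_spec.choose_spec.1,
          (hex t ht).choose_spec.choose_spec.2.2.1,
          (hex t ht).choose_spec.choose_spec.2.2.2⟩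
        have h := hε_le t
        rw [hg] at h; dsimp only at h
        rwa [dif_pos ht] at h
      have claimA : ∀ (n : ℕ) (t : S), t ∈ W → r t ≤ n →
          badP M σ W F (r t + 1) t ≤ 1 - ε ^ (r t + 1) := by
        intro n
        induction n with
        | zero =>
          intro t htW hrt
          by_cases htF : t ∈ F
          · rw [RA_badP_zero_outside M σ W F _ (fun h => h.2 htF)]
            have : ε ^ (r t + 1) ≤ 1 := pow_le_one₀ (le_of_lt hε_pos) hε1
            linarith
          · obtain ⟨a, u, -, -, -, hru⟩ := hg_spec t ⟨htW, htF⟩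
            omega
        | succ n ih =>
          intro t htW hrt
          by_cases htF : t ∈ F
          · rw [RA_badP_zero_outside M σ W F _ (fun h => h.2 htF)]
            have : ε ^ (r t + 1) ≤ 1 := pow_le_one₀ (le_of_lt hε_pos) hε1
            linarith
          · have htWF : t ∈ W \ F := ⟨htW, htF⟩
            obtain ⟨a, u, hga, hσa, huW, hru⟩ := hg_spec t htWF
            have hδ1 : σ.toFun t a * M.P t a u * badP M σ W F (r t) u
                ≤ σ.toFun t a * M.P t a u * (1 - ε ^ r t) := by
              have hmono : badP M σ W F (r t) u ≤ badP M σ W F (r u + 1) u :=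
                RA_badP_antitone M σ W F u (by omega : r u + 1 ≤ r t)
              have hA := ih u huW (by omega)
              have hpow : ε ^ r t ≤ ε ^ (r u + 1) :=
                pow_le_pow_of_le_one (le_of_lt hε_pos) hε1 (by omega)
              have hb : badP M σ W F (r t) u ≤ 1 - ε ^ r t := by linarith
              exact mul_le_mul_of_nonneg_left hb
                (mul_nonneg (σ.nonneg t a) (M.P_nonneg t a u))
            have hsum : badP M σ W F (r t + 1) t
                = σ.toFun t a * M.P t a u * badP M σ W F (r t) u
                  + ∑ p ∈ Finset.univ.erase (a, u),
                    σ.toFun t p.1 * M.P t p.1 p.2 * badP M σ W F (r t) p.2 := by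
              simp only [badP, if_pos htWF]
              exact (Finset.add_sum_erase _ _ (Finset.mem_univ (a, u))).symm
            have herase : ∑ p ∈ Finset.univ.erase (a, u),
                σ.toFun t p.1 * M.P t p.1 p.2 * badP M σ W F (r t) p.2
                ≤ 1 - σ.toFun t a * M.P t a u := by
              calc ∑ p ∈ Finset.univ.erase (a, u),
                    σ.toFun t p.1 * M.P t p.1 p.2 * badP M σ W F (r t) p.2
                  ≤ ∑ p ∈ Finset.univ.erase (a, u), σ.toFun t p.1 * M.P t p.1 p.2 :=
                    Finset.sum_le_sum fun p _ => by
                      have := mul_le_mul_of_nonneg_left (RA_badP_le_one M σ W F (r t) p.2)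
                        (mul_nonneg (σ.nonneg t p.1) (M.P_nonneg t p.1 p.2))
                      simpa using this
                _ = (∑ p : A × S, σ.toFun t p.1 * M.P t p.1 p.2)
                      - σ.toFun t a * M.P t a u :=
                    Finset.sum_erase_eq_sub (Finset.mem_univ (a, u))
                _ = 1 - σ.toFun t a * M.P t a u := by rw [RA_sum_sp]
            have hpownn : (0:ℝ) ≤ ε ^ r t := pow_nonneg (le_of_lt hε_pos) _
            have hfin : ε ^ (r t + 1) ≤ σ.toFun t a * M.P t a u * ε ^ r t := by
              rw [pow_succ]
              calc ε ^ r t * ε ≤ ε ^ r t * (σ.toFun t a * M.P t a u) :=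
                    mul_le_mul_of_nonneg_left hga hpownn
                _ = σ.toFun t a * M.P t a u * ε ^ r t := by ring
            rw [hsum]
            nlinarith [hδ1, herase, hfin]
      set N : ℕ := Finset.univ.sup r + 1 with hN
      have hrN : ∀ t : S, r t + 1 ≤ N := fun t => by
        have := Finset.le_sup (f := r) (Finset.mem_univ t); omega
      set ρ : ℝ := 1 - ε ^ N with hρ
      have hρ0 : 0 ≤ ρ := by
        have : ε ^ N ≤ 1 := pow_le_one₀ (le_of_lt hε_pos) hε1
        rw [hρ]; linarith
      have hρ1 : ρ < 1 := by
        have : 0 < ε ^ N := pow_pos hε_pos _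
        rw [hρ]; linarith
      have hbN : ∀ t, badP M σ W F N t ≤ ρ := by
        intro t
        by_cases ht : t ∈ W \ F
        · calc badP M σ W F N t ≤ badP M σ W F (r t + 1) t :=
              RA_badP_antitone M σ W F t (hrN t)
            _ ≤ 1 - ε ^ (r t + 1) := claimA (r t) t ht.1 le_rfl
            _ ≤ ρ := by
                have : ε ^ N ≤ ε ^ (r t + 1) :=
                  pow_le_pow_of_le_one (le_of_lt hε_pos) hε1 (hrN t)
                rw [hρ]; linarith
        · rw [RA_badP_zero_outside M σ W F _ ht]; exact hρ0
      have hkN : ∀ k : ℕ, ∀ t : S, badP M σ W F (k * N) t ≤ ρ ^ k := by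
        intro k
        induction k with
        | zero => intro t; simpa using RA_badP_le_one M σ W F 0 t
        | succ k ih =>
          intro t
          have he : (k + 1) * N = k * N + N := by ring
          rw [he]
          calc badP M σ W F (k * N + N) t ≤ ρ * badP M σ W F (k * N) t :=
              RA_badP_comp M σ W F N ρ hρ0 hbN (k * N) t
            _ ≤ ρ * ρ ^ k := mul_le_mul_of_nonneg_left (ih t) hρ0
            _ = ρ ^ (k + 1) := by rw [pow_succ]; ring
      obtain ⟨k, hk⟩ := exists_pow_lt_of_lt_one hη hρ1
      exact ⟨k * N, lt_of_le_of_lt (hkN k s) hk⟩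
  have hbdd : BddAbove (Set.range fun n => satProbN M σ.strat.toFun U F s n) := by
    refine ⟨1, ?_⟩
    rintro x ⟨n, rfl⟩
    have h1 := hkey n
    have h2 := RA_badP_nonneg M σ W F n s
    simp only [h1]
    linarith
  have hle : prSat M σ.strat.toFun U F s ≤ 1 := by
    refine ciSup_le fun n => ?_
    rw [hkey n]
    have := RA_badP_nonneg M σ W F n s
    linarith
  have hge' : ∀ n, 1 - badP M σ W F n s ≤ prSat M σ.strat.toFun U F s := by
    intro n
    rw [← hkey n]
    exact le_ciSup hbdd n
  have hge : 1 ≤ prSat M σ.strat.toFun U F s := by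
    by_contra hcon
    push_neg at hcon
    obtain ⟨n, hn⟩ := hto (1 - prSat M σ.strat.toFun U F s) (by linarith)
    have := hge' n
    linarith
  exact le_antisymm hle hge
end

section
/- Consider a finite MDP M with defender state-observation function DObs_S and user objective φ0 = ¬U0 𝖴 F0, and the action-visible belief update Update_v. Let s0 a0 s1 … sn be any sequence with ai ∈ A(si) and P(s(i+1)|si,ai) > 0 for all i < n, and define B0 = DObs_S(s0) and B(i+1) = Update_v(Bi, ai, s(i+1)). If Bn ≠ ∅, then for every t ∈ Bn there exist states s'0 ∈ B0, …, s'n ∈ Bn with s'n = t such that ai ∈ Allowed0(s'i) and P(s'(i+1)|s'i,ai) > 0 for all i < n; i.e., every element of the defender's belief is reached from an initial observation-equivalent state by a path that uses only user-permissible actions matching the observed action sequence. -/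
open scoped BigOperators Classical

variable {S A : Type} [Fintype S] [Fintype A]

lemma beliefV_concat (M : MDP S A) (O : ObsFun M) (U0 F0 : Set S)
    (s0 : S) (l : List (A × S)) (p : A × S) :
    beliefV M O U0 F0 s0 (l ++ [p])
      = updateV M O U0 F0 (beliefV M O U0 F0 s0 l) p.1 p.2 := by
  simp [beliefV, List.foldl_append]

lemma beliefV_back (M : MDP S A) (O : ObsFun M) (U0 F0 : Set S)
    (l : List (A × S)) (s0 t : S) (ht : t ∈ beliefV M O U0 F0 s0 l) :
    ∃ g : ℕ → S, g l.length = t ∧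
      (∀ i ≤ l.length, g i ∈ beliefV M O U0 F0 s0 (l.take i)) ∧
      ∀ i : Fin l.length, (l.get i).1 ∈ allowed M U0 F0 (g i.val) ∧
        0 < M.P (g i.val) (l.get i).1 (g (i.val + 1)) := by
  induction l using List.reverseRecOn generalizing t with
  | nil =>
      refine ⟨fun _ => t, rfl, ?_, ?_⟩
      · intro i hi
        have : i = 0 := Nat.le_zero.mp hi
        subst this
        simpa [beliefV] using ht
      · intro i; exact absurd i.2 (by simp)
  | append_singleton l p ih =>
      rw [beliefV_concat] at ht
      obtain ⟨so, hso, ha, hpost, hobs⟩ := ht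
      obtain ⟨g', hg'last, hg'mem, hg'step⟩ := ih so hso
      refine ⟨fun i => if i ≤ l.length then g' i else t, ?_, ?_, ?_⟩
      · simp
      · intro i hi
        simp only [List.length_append, List.length_cons, List.length_nil] at hi
        rcases Nat.lt_or_ge i (l.length + 1) with h | h
        · have hle : i ≤ l.length := Nat.lt_succ_iff.mp h
          simp only [if_pos hle]
          rw [List.take_append_of_le_length hle]
          exact hg'mem i hle
        · have : i = l.length + 1 := le_antisymm hi h
          subst this
          have hn : ¬ (l.length + 1 ≤ l.length) := by omega
          simp only [if_neg hn]
          rw [List.take_of_length_le (by simp)]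
          rw [beliefV_concat]
          exact ⟨so, hso, ha, hpost, hobs⟩
      · intro i
        have hi : i.val < l.length + 1 := by simpa using i.2
        rcases Nat.lt_or_ge i.val l.length with h | h
        · have hget : ((l ++ [p]).get i).1 = (l.get ⟨i.val, h⟩).1 := by
            congr 1
            exact List.getElem_append_left h
          have h1 : i.val ≤ l.length := le_of_lt h
          have h2 : i.val + 1 ≤ l.length := h
          simp only [hget, if_pos h1, if_pos h2]
          exact hg'step ⟨i.val, h⟩
        · have hv : i.val = l.length := by omega
          have hget : ((l ++ [p]).get i) = p := by
            rw [List.get_eq_getElem]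
            simp [hv]
          have h1 : i.val ≤ l.length := le_of_eq hv
          have h2 : ¬ (i.val + 1 ≤ l.length) := by omega
          have e1 : (if i.val ≤ l.length then g' i.val else t) = so := by
            rw [if_pos h1, hv, hg'last]
          have e2 : (if i.val + 1 ≤ l.length then g' (i.val + 1) else t) = t :=
            if_neg h2
          rw [hget]
          simp only [e1, e2]
          exact ⟨ha, hpost⟩

/-- every element of the action-visible defender's belief is the endpoint
of a path from an initial observation-equivalent state that uses only user-permissible
actions matching the observed action sequence. -/
theorem beliefV_backward_path (M : MDP S A) (O : ObsFun M) (U0 F0 : Set S)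
    (h0 : Disjoint U0 F0) (s0 : S) (l : List (A × S)) (hl : isHist M s0 l)
    (hBn : beliefV M O U0 F0 s0 l ≠ ∅) :
    ∀ t ∈ beliefV M O U0 F0 s0 l, ∃ g : ℕ → S, g l.length = t ∧
      (∀ i ≤ l.length, g i ∈ beliefV M O U0 F0 s0 (l.take i)) ∧
      ∀ i : Fin l.length, (l.get i).1 ∈ allowed M U0 F0 (g i.val) ∧
        0 < M.P (g i.val) (l.get i).1 (g (i.val + 1)) := by
  intro t ht
  exact beliefV_back M O U0 F0 l s0 t ht
end

section
/- Consider a finite MDP M with defender state-observation function DObs_S and user objective φ0 = ¬U0 𝖴 F0, and the action-visible belief update Update_v. Let s0 a0 s1 … sn be any sequence with ai ∈ A(si) and P(s(i+1)|si,ai) > 0 for all i < n, and define B0 = DObs_S(s0) and B(i+1) = Update_v(Bi, ai, s(i+1)). Then Bi ⊆ DObs_S(si) for all 0 ≤ i ≤ n, and Bi ⊆ ASW(φ0) for all 1 ≤ i ≤ n; i.e., the defender's belief always consists of states observation-equivalent to the true state, and after the first update it consists only of states in the user's almost-sure winning region. -/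
open scoped BigOperators Classical

variable {S A : Type} [Fintype S] [Fintype A]

lemma updateV_subset_obs (M : MDP S A) (O : ObsFun M) (U0 F0 : Set S)
    (B : Set S) (a : A) (s'' : S) :
    updateV M O U0 F0 B a s'' ⊆ O.obs s'' := by
  rintro s' ⟨so, _, _, _, hobs⟩
  rw [← hobs]; exact O.mem_self s'

lemma updateV_subset_ASW (M : MDP S A) (O : ObsFun M) (U0 F0 : Set S)
    (B : Set S) (a : A) (s'' : S) :
    updateV M O U0 F0 B a s'' ⊆ ASW M U0 F0 := by
  rintro s' ⟨so, _, ⟨_, _, hpost⟩, hp, _⟩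
  exact hpost hp

lemma beliefV_take_succ (M : MDP S A) (O : ObsFun M) (U0 F0 : Set S)
    (s0 : S) (l : List (A × S)) (i : ℕ) (hi : i < l.length) :
    beliefV M O U0 F0 s0 (l.take (i + 1)) =
      updateV M O U0 F0 (beliefV M O U0 F0 s0 (l.take i)) l[i].1 l[i].2 := by
  unfold beliefV
  rw [List.take_succ, List.getElem?_eq_getElem hi, Option.toList_some,
    List.foldl_append, List.foldl_cons, List.foldl_nil]

/-- along any history, the action-visible defender's belief consists of
states observation-equivalent to the true state, and after the first update it consists
only of states of the user's almost-sure winning region. -/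
theorem beliefV_subset_obs_and_ASW (M : MDP S A) (O : ObsFun M) (U0 F0 : Set S)
    (h0 : Disjoint U0 F0) (s0 : S) (l : List (A × S)) (hl : isHist M s0 l) :
    (∀ i ≤ l.length, beliefV M O U0 F0 s0 (l.take i) ⊆ O.obs (stateAt s0 l i)) ∧
    (∀ i, 1 ≤ i → i ≤ l.length →
      beliefV M O U0 F0 s0 (l.take i) ⊆ ASW M U0 F0) := by
  constructor
  · intro i hi
    match i with
    | 0 => simp [beliefV, stateAt]
    | j + 1 =>
      have hj : j < l.length := hi
      rw [beliefV_take_succ M O U0 F0 s0 l j hj]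
      have hst : stateAt s0 l (j + 1) = l[j].2 := by
        simp [stateAt, List.getElem?_eq_getElem hj]
      rw [hst]
      exact updateV_subset_obs M O U0 F0 _ _ _
  · intro i h1 hi
    match i with
    | j + 1 =>
      have hj : j < l.length := hi
      rw [beliefV_take_succ M O U0 F0 s0 l j hj]
      exact updateV_subset_ASW M O U0 F0 _ _ _
end
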